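/- Let n ≥ 1 and let P be a polynomial with real coefficients of degree 2n − 1 whose leading coefficient is strictly positive. Then there exists a₀ ≥ 0 such that for all a, b ∈ ℝ with |a| ≥ a₀ and 0 < b < 1, one has Im P(a + ib) > 0. -/

import Mathlib

open Polynomial Finset

lemma pow_diff_norm_le (z w : ℂ) (r : ℝ) (k : ℕ) (hz : ‖z‖ ≤ r) (hw : ‖w‖ ≤ r) :
    ‖z ^ k - w ^ k‖ ≤ (k : ℝ) * r ^ (k - 1) * ‖z - w‖ := by
  have hr : 0 ≤ r := le_trans (norm_nonneg z) hz
  rw [← geom_sum₂_mul z w k, norm_mul]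
  gcongr ?_ * _
  calc ‖∑ i ∈ range k, z ^ i * w ^ (k - 1 - i)‖
      ≤ ∑ i ∈ range k, ‖z ^ i * w ^ (k - 1 - i)‖ := norm_sum_le _ _
    _ ≤ ∑ i ∈ range k, r ^ (k - 1) := by
        refine Finset.sum_le_sum fun i hi => ?_
        rw [norm_mul, norm_pow, norm_pow]
        calc ‖z‖ ^ i * ‖w‖ ^ (k - 1 - i) ≤ r ^ i * r ^ (k - 1 - i) := by
              gcongr
          _ = r ^ (k - 1) := by
              rw [← pow_add]
              congr 1
              have := mem_range.mp hi
              omega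
    _ = (k : ℝ) * r ^ (k - 1) := by simp [mul_comm]

lemma eval_diff_norm_le (Q : Polynomial ℂ) (z w : ℂ) (r : ℝ) (hz : ‖z‖ ≤ r) (hw : ‖w‖ ≤ r) :
    ‖Q.eval z - Q.eval w‖ ≤
      (∑ k ∈ range (Q.natDegree + 1), ‖Q.coeff k‖ * k * r ^ (k - 1)) * ‖z - w‖ := by
  rw [Q.eval_eq_sum_range, Q.eval_eq_sum_range, ← Finset.sum_sub_distrib, Finset.sum_mul]
  refine le_trans (norm_sum_le _ _) (Finset.sum_le_sum fun k _ => ?_)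
  rw [← mul_sub, norm_mul, mul_assoc, mul_assoc]
  exact mul_le_mul_of_nonneg_left (by rw [← mul_assoc]; exact pow_diff_norm_le z w r k hz hw)
    (norm_nonneg _)

theorem stmt_14 (n : ℕ) (hn : 1 ≤ n) (P : Polynomial ℝ)
    (hdeg : P.natDegree = 2 * n - 1) (hlead : 0 < P.leadingCoeff) :
    ∃ a₀ : ℝ, 0 ≤ a₀ ∧ ∀ a b : ℝ, a₀ ≤ |a| → 0 < b → b < 1 →
      0 < ((P.map (algebraMap ℝ ℂ)).eval ((a : ℂ) + (b : ℂ) * Complex.I)).im := by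
  rcases eq_or_lt_of_le hn with h1 | h1
  · -- n = 1, degree 1 case
    have hdeg1 : P.natDegree = 1 := by omega
    refine ⟨0, le_refl _, fun a b ha hb hb1 => ?_⟩
    have hP := P.eq_X_add_C_of_natDegree_le_one hdeg1.le
    have hc1 : P.coeff 1 = P.leadingCoeff := by rw [Polynomial.leadingCoeff, hdeg1]
    rw [hP]
    simp only [Polynomial.map_add, Polynomial.map_mul, Polynomial.map_C, Polynomial.map_X,
      Polynomial.eval_add, Polynomial.eval_mul, Polynomial.eval_C, Polynomial.eval_X,
      Complex.add_im, Complex.mul_im]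
    have : algebraMap ℝ ℂ (P.coeff 1) = ((P.coeff 1 : ℝ) : ℂ) := rfl
    simp [this, Complex.ofReal_re, Complex.ofReal_im, hc1]
    positivity
  · -- degree d ≥ 3 case
    set d := P.natDegree with hd
    have hd3 : 3 ≤ d := by omega
    have hdeven : Even (d - 1) := by
      rw [hdeg]; exact ⟨n - 1, by omega⟩
    set c := P.leadingCoeff with hc
    set QR := (P.eraseLead).map (algebraMap ℝ ℂ) with hQR
    set KR := ∑ k ∈ Finset.range (QR.natDegree + 1), ‖QR.coeff k‖ * k with hKR
    have hKR0 : 0 ≤ KR := Finset.sum_nonneg fun k _ => by positivity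
    set K : ℝ := c * d ^ 2 + KR with hK
    have hK0 : 0 < K := add_pos_of_pos_of_nonneg (by positivity) hKR0
    have hcd : (0:ℝ) < c * d := by positivity
    refine ⟨max 1 (2 ^ d * (K + 1) / (c * d)), le_trans zero_le_one (le_max_left _ _),
      fun a b ha hb hb1 => ?_⟩
    have ha1 : (1:ℝ) ≤ |a| := le_trans (le_max_left _ _) ha
    have ha2 : 2 ^ d * (K + 1) / (c * d) ≤ |a| := le_trans (le_max_right _ _) ha
    set r : ℝ := |a| + 1 with hr
    have hr1 : (1:ℝ) ≤ r := by simp [hr]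
    have hr0 : (0:ℝ) ≤ r := by linarith
    set z : ℂ := (a : ℂ) + (b : ℂ) * Complex.I with hz
    have hza : z - (a : ℂ) = (b : ℂ) * Complex.I := by ring
    have hzan : ‖z - (a : ℂ)‖ = b := by
      rw [hza]; simp [abs_of_pos hb]
    have hzr : ‖z‖ ≤ r := by
      calc ‖z‖ ≤ ‖(a:ℂ)‖ + ‖(b:ℂ) * Complex.I‖ := norm_add_le _ _
        _ ≤ |a| + 1 := by
            simp [Complex.norm_real, abs_of_pos hb]; linarith
    have har : ‖(a:ℂ)‖ ≤ r := by simp [Complex.norm_real]; linarith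
    -- Step A : lower bound on im (QR.eval z)
    have hA : -(KR * r ^ (d - 2) * b) ≤ (QR.eval z).im := by
      have h0 : QR.eval ((a : ℂ)) = ((P.eraseLead.eval a : ℝ) : ℂ) := by
        rw [hQR, Polynomial.eval_map]
        exact Polynomial.eval₂_at_apply _ _
      have hbound := eval_diff_norm_le QR z (a : ℂ) r hzr har
      rw [hzan] at hbound
      have hM : (∑ k ∈ Finset.range (QR.natDegree + 1), ‖QR.coeff k‖ * k * r ^ (k - 1))
          ≤ KR * r ^ (d - 2) := by
        rw [hKR, Finset.sum_mul]
        refine Finset.sum_le_sum fun k hk => ?_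
        rcases Nat.eq_zero_or_pos k with h | h
        · simp [h]
        · have hk1 : k ≤ d - 1 := le_trans (Nat.lt_succ_iff.mp (Finset.mem_range.mp hk))
            (le_trans Polynomial.natDegree_map_le P.eraseLead_natDegree_le)
          have : r ^ (k - 1) ≤ r ^ (d - 2) := pow_le_pow_right₀ hr1 (by omega)
          have hcn : (0:ℝ) ≤ ‖QR.coeff k‖ * k := by positivity
          calc ‖QR.coeff k‖ * k * r ^ (k - 1) ≤ ‖QR.coeff k‖ * k * r ^ (d - 2) :=
            mul_le_mul_of_nonneg_left this hcn
            _ = ‖QR.coeff k‖ * k * r ^ (d - 2) := rfl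
      have h2 : |(QR.eval z).im| ≤ KR * r ^ (d - 2) * b := by
        have him : (QR.eval z).im = (QR.eval z - QR.eval (a : ℂ)).im := by
          rw [Complex.sub_im, h0]; simp
        rw [him]
        calc |(QR.eval z - QR.eval (a : ℂ)).im| ≤ ‖QR.eval z - QR.eval (a : ℂ)‖ := by
              exact Complex.abs_im_le_norm _
          _ ≤ (∑ k ∈ Finset.range (QR.natDegree + 1), ‖QR.coeff k‖ * k * r ^ (k - 1)) * b :=
              hbound
          _ ≤ KR * r ^ (d - 2) * b := mul_le_mul_of_nonneg_right hM hb.le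
      linarith [neg_abs_le (QR.eval z).im]
    -- Step B : lower bound on im (z ^ d)
    have hB : b * ((d : ℝ) * a ^ (d - 1) - (d : ℝ) ^ 2 * r ^ (d - 2)) ≤ (z ^ d).im := by
      have hgeom := geom_sum₂_mul z ((a : ℂ)) d
      set S : ℂ := ∑ j ∈ Finset.range d, z ^ j * (a : ℂ) ^ (d - 1 - j) with hS
      have hzd : z ^ d = (a : ℂ) ^ d + (b : ℂ) * Complex.I * S := by
        rw [hza] at hgeom
        linear_combination (-1 : ℂ) * hgeom
      have him : (z ^ d).im = b * S.re := by
        rw [hzd]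
        simp [Complex.add_im, Complex.mul_im, Complex.mul_re, ← Complex.ofReal_pow]
      rw [him]
      refine mul_le_mul_of_nonneg_left ?_ hb.le
      have hre : S.re = ∑ j ∈ Finset.range d, (z ^ j * (a : ℂ) ^ (d - 1 - j)).re := by
        rw [hS]; exact Complex.re_sum _ _
      rw [hre]
      have hterm : ∀ j ∈ Finset.range d,
          a ^ (d - 1) - (j : ℝ) * r ^ (d - 2) ≤ (z ^ j * (a : ℂ) ^ (d - 1 - j)).re := by
        intro j hj
        have hjd := Finset.mem_range.mp hj
        have hnorm : ‖z ^ j * (a : ℂ) ^ (d - 1 - j) - ((a ^ (d - 1) : ℝ) : ℂ)‖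
            ≤ (j : ℝ) * r ^ (d - 2) := by
          have hds : z ^ j * (a : ℂ) ^ (d - 1 - j) - ((a ^ (d - 1) : ℝ) : ℂ)
              = (a : ℂ) ^ (d - 1 - j) * (z ^ j - (a : ℂ) ^ j) := by
            have hcc : ((a ^ (d - 1) : ℝ) : ℂ) = (a : ℂ) ^ (d - 1 - j) * (a : ℂ) ^ j := by
              push_cast
              rw [← pow_add]
              congr 1
              omega
            rw [hcc]; ring
          rw [hds, norm_mul, norm_pow]
          rcases Nat.eq_zero_or_pos j with h | h
          · simp [h]
          · have hp := pow_diff_norm_le z ((a : ℂ)) r j hzr har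
            rw [hzan] at hp
            have hjr : (0:ℝ) ≤ (j : ℝ) * r ^ (j - 1) := by positivity
            have hp' : ‖z ^ j - (a : ℂ) ^ j‖ ≤ (j : ℝ) * r ^ (j - 1) := by nlinarith
            calc ‖(a : ℂ)‖ ^ (d - 1 - j) * ‖z ^ j - (a : ℂ) ^ j‖
                ≤ r ^ (d - 1 - j) * ((j : ℝ) * r ^ (j - 1)) :=
                  mul_le_mul (pow_le_pow_left₀ (norm_nonneg _) har _) hp' (norm_nonneg _)
                    (by positivity)
              _ = (j : ℝ) * (r ^ (d - 1 - j) * r ^ (j - 1)) := by ring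
              _ = (j : ℝ) * r ^ (d - 2) := by
                  rw [← pow_add]
                  congr 2
                  omega
        have h5 : |(z ^ j * (a : ℂ) ^ (d - 1 - j)).re - a ^ (d - 1)| ≤ (j : ℝ) * r ^ (d - 2) := by
          have hre2 : (z ^ j * (a : ℂ) ^ (d - 1 - j)).re - a ^ (d - 1)
              = (z ^ j * (a : ℂ) ^ (d - 1 - j) - ((a ^ (d - 1) : ℝ) : ℂ)).re := by
            simp [Complex.sub_re, ← Complex.ofReal_pow]
          rw [hre2]
          refine le_trans ?_ hnorm
          exact Complex.abs_re_le_norm _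
        linarith [(abs_le.mp h5).1]
      refine le_trans ?_ (Finset.sum_le_sum hterm)
      rw [Finset.sum_sub_distrib, Finset.sum_const, Finset.card_range, ← Finset.sum_mul]
      have hj : ∑ j ∈ Finset.range d, (j : ℝ) ≤ (d : ℝ) ^ 2 := by
        calc ∑ j ∈ Finset.range d, (j : ℝ) ≤ ∑ _j ∈ Finset.range d, (d : ℝ) :=
              Finset.sum_le_sum fun j hj => by
                exact_mod_cast (Finset.mem_range.mp hj).le
          _ = (d : ℝ) ^ 2 := by
              rw [Finset.sum_const, Finset.card_range, nsmul_eq_mul]; ring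
      have hrp : (0:ℝ) ≤ r ^ (d - 2) := by positivity
      have := mul_le_mul_of_nonneg_right hj hrp
      simp only [nsmul_eq_mul]
      linarith
    -- Step C : combine
    have hsplit : ((P.map (algebraMap ℝ ℂ)).eval z).im = (QR.eval z).im + c * (z ^ d).im := by
      have hPe := P.eraseLead_add_C_mul_X_pow
      have hmap : P.map (algebraMap ℝ ℂ)
          = QR + Polynomial.C ((c : ℝ) : ℂ) * Polynomial.X ^ d := by
        conv_lhs => rw [← hPe]
        simp only [Polynomial.map_add, Polynomial.map_mul, Polynomial.map_C, Polynomial.map_pow,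
          Polynomial.map_X, hQR]
        norm_num [Complex.coe_algebraMap]
        rfl
      rw [hmap]
      simp [Complex.add_im, Complex.mul_im]
    rw [hsplit]
    have hcB : c * (b * ((d : ℝ) * a ^ (d - 1) - (d : ℝ) ^ 2 * r ^ (d - 2))) ≤ c * (z ^ d).im :=
      mul_le_mul_of_nonneg_left hB hlead.le
    have hfinal : 0 < b * (c * d * a ^ (d - 1) - K * r ^ (d - 2)) := by
      have hrle : r ^ (d - 2) ≤ 2 ^ d * |a| ^ (d - 2) := by
        calc r ^ (d - 2) ≤ (2 * |a|) ^ (d - 2) :=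
              pow_le_pow_left₀ hr0 (by rw [hr]; linarith) _
          _ = 2 ^ (d - 2) * |a| ^ (d - 2) := mul_pow _ _ _
          _ ≤ 2 ^ d * |a| ^ (d - 2) :=
              mul_le_mul_of_nonneg_right (pow_le_pow_right₀ one_le_two (by omega))
                (by positivity)
      have hapow : a ^ (d - 1) = |a| * |a| ^ (d - 2) := by
        rw [← hdeven.pow_abs]
        have hdd : d - 1 = (d - 2) + 1 := by omega
        rw [hdd, pow_succ, mul_comm]
      have hcda : 2 ^ d * (K + 1) ≤ c * d * |a| := by
        rw [div_le_iff₀ hcd] at ha2; linarith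
      refine mul_pos hb ?_
      rw [hapow]
      have h2 : (0:ℝ) < |a| ^ (d - 2) := by positivity
      have h3 : (0:ℝ) < 2 ^ d * |a| ^ (d - 2) := by positivity
      have e1 : K * r ^ (d - 2) ≤ K * (2 ^ d * |a| ^ (d - 2)) :=
        mul_le_mul_of_nonneg_left hrle hK0.le
      have e2 : K * (2 ^ d * |a| ^ (d - 2)) < (K + 1) * (2 ^ d * |a| ^ (d - 2)) :=
        mul_lt_mul_of_pos_right (lt_add_one K) h3
      have e3 : (K + 1) * (2 ^ d * |a| ^ (d - 2)) ≤ (c * d * |a|) * |a| ^ (d - 2) := by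
        calc (K + 1) * (2 ^ d * |a| ^ (d - 2)) = (2 ^ d * (K + 1)) * |a| ^ (d - 2) := by ring
          _ ≤ (c * d * |a|) * |a| ^ (d - 2) := mul_le_mul_of_nonneg_right hcda h2.le
      have e4 : c * ↑d * (|a| * |a| ^ (d - 2)) = (c * ↑d * |a|) * |a| ^ (d - 2) := by ring
      linarith
    calc (0:ℝ) < b * (c * d * a ^ (d - 1) - K * r ^ (d - 2)) := hfinal
      _ = -(KR * r ^ (d-2) * b) + c * (b * ((d : ℝ) * a ^ (d - 1) - (d : ℝ) ^ 2 * r ^ (d - 2))) := by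
          rw [hK]; ring
      _ ≤ (QR.eval z).im + c * (z ^ d).im := add_le_add hA hcB
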